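/- Let (Z,S) be an aperiodic zero-dimensional topological dynamical system (Z compact metric, S a homeomorphism with no periodic points) and N a positive integer. Then there exists a clopen set B ⊆ Z such that B ∩ S^k B = ∅ for all 1 ≤ k ≤ N and Z = ⋃_{k=1}^{2N+1} S^k B. -/

import Mathlib

open scoped ENNReal NNReal
open Set Function Filter Topology

/-- The `n`-th iterate (`n ∈ ℤ`) of a homeomorphism. -/
noncomputable def hIter {X : Type*} [TopologicalSpace X] (T : X ≃ₜ X) (n : ℤ) (x : X) : X :=
  if 0 ≤ n then (⇑T)^[n.toNat] x else (⇑T.symm)^[(-n).toNat] x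

/-- `WidimLE d ε n`: there is a finite open cover of mesh `< ε` (w.r.t. the distance
function `d`) and of order `≤ n`, i.e. every point lies in at most `n+1` members
(equivalently any `n+2` distinct members have empty intersection). -/
def WidimLE {X : Type*} [TopologicalSpace X] (d : X → X → ℝ) (ε : ℝ) (n : ℕ) : Prop :=
  ∃ (N : ℕ) (U : Fin N → Set X),
    (∀ i, IsOpen (U i)) ∧ (⋃ i, U i) = Set.univ ∧
    (∀ i, ∀ x ∈ U i, ∀ y ∈ U i, d x y < ε) ∧
    (∀ x : X, ({i | x ∈ U i} : Set (Fin N)).ncard ≤ n + 1)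

/-- `widim d ε` : the ε-width dimension with respect to the distance function `d`. -/
noncomputable def widim {X : Type*} [TopologicalSpace X] (d : X → X → ℝ) (ε : ℝ) : ℝ≥0∞ :=
  sInf {c : ℝ≥0∞ | ∃ n : ℕ, c = n ∧ WidimLE d ε n}

/-- `dynDist T n` is the dynamical distance `d_0^{n-1}(x,y) = max_{0 ≤ i < n} d(T^i x, T^i y)`. -/
noncomputable def dynDist {X : Type*} [PseudoMetricSpace X] (T : X → X) (n : ℕ) (x y : X) : ℝ :=
  (((Finset.range n).sup fun i => nndist (T^[i] x) (T^[i] y)) : ℝ≥0)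

/-- Mean dimension `mdim(X,T) = sup_{ε>0} lim_n widim_ε(X, d_0^{n-1})/n`
(the limit exists, so it coincides with the limsup used here). -/
noncomputable def mdim {X : Type*} [MetricSpace X] (T : X → X) : ℝ≥0∞ :=
  ⨆ (ε : ℝ) (_ : 0 < ε), Filter.atTop.limsup fun n : ℕ => widim (dynDist T n) ε / (n : ℝ≥0∞)

/-- The left shift on `ℤ`-indexed sequences. -/
def shift {A : Type*} (x : ℤ → A) : ℤ → A := fun n => x (n + 1)

section
variable {Z : Type*} [TopologicalSpace Z] (S : Z ≃ₜ Z) (N : ℕ)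

/-- The "forbidden zone" around a set: the set together with its images under
`S^k` and `S^{-k}` for `1 ≤ k ≤ N`. -/
def mbadSet (A : Set Z) : Set Z :=
  A ∪ ⋃ k ∈ Finset.Icc 1 N, ((⇑S)^[k] '' A ∪ (⇑S.symm)^[k] '' A)

lemma isClopen_image_iter (T : Z ≃ₜ Z) (k : ℕ) {A : Set Z} (hA : IsClopen A) :
    IsClopen ((⇑T)^[k] '' A) := by
  induction k with
  | zero => simpa using hA
  | succ n ih =>
      rw [Function.iterate_succ', Set.image_comp]
      have : ⇑T '' ((⇑T)^[n] '' A) = ⇑T.symm ⁻¹' ((⇑T)^[n] '' A) := by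
        ext x
        constructor
        · rintro ⟨y, hy, rfl⟩; simpa using hy
        · intro hx; exact ⟨T.symm x, hx, by simp⟩
      rw [this]
      exact ih.preimage T.symm.continuous

lemma mbadSet_isClopen {A : Set Z} (hA : IsClopen A) : IsClopen (mbadSet S N A) := by
  refine hA.union ?_
  refine Set.Finite.isClopen_biUnion (Finset.Icc 1 N).finite_toSet ?_
  intro k _
  exact (isClopen_image_iter S k hA).union (isClopen_image_iter S.symm k hA)

lemma mbadSet_mono {A B : Set Z} (h : A ⊆ B) : mbadSet S N A ⊆ mbadSet S N B := by
  refine Set.union_subset_union h ?_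
  refine Set.iUnion₂_mono fun k _ => ?_
  exact Set.union_subset_union (Set.image_mono h) (Set.image_mono h)

lemma subset_mbadSet (A : Set Z) : A ⊆ mbadSet S N A := Set.subset_union_left

/-- the marker set built from a list of clopen pieces -/
def marker : List (Set Z) → Set Z
  | [] => ∅
  | U :: L => marker L ∪ (U \ mbadSet S N (marker L))

lemma marker_isClopen (L : List (Set Z)) (h : ∀ U ∈ L, IsClopen U) :
    IsClopen (marker S N L) := by
  induction L with
  | nil => simpa [marker] using isClopen_empty
  | cons U L ih =>
      have hL : ∀ V ∈ L, IsClopen V := fun V hV => h V (List.mem_cons_of_mem _ hV)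
      exact (ih hL).union ((h U (List.mem_cons_self)).diff
        (mbadSet_isClopen S N (ih hL)))

lemma marker_disj (L : List (Set Z))
    (h : ∀ U ∈ L, ∀ k, 1 ≤ k → k ≤ N → U ∩ (⇑S)^[k] '' U = ∅) :
    ∀ k, 1 ≤ k → k ≤ N → marker S N L ∩ (⇑S)^[k] '' marker S N L = ∅ := by
  induction L with
  | nil => intro k _ _; simp [marker]
  | cons U L ih =>
      have hL := fun V hV => h V (List.mem_cons_of_mem _ hV)
      intro k hk1 hkN
      have IH := ih hL k hk1 hkN
      rw [Set.eq_empty_iff_forall_notMem]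
      rintro x ⟨hx1, y, hy, rfl⟩
      have hmem : k ∈ Finset.Icc 1 N := Finset.mem_Icc.2 ⟨hk1, hkN⟩
      have hsy : (⇑S.symm)^[k] ((⇑S)^[k] y) = y :=
        (Function.LeftInverse.iterate S.symm_apply_apply k) y
      rcases hx1 with hx1 | hx1 <;> rcases hy with hy | hy
      · exact Set.eq_empty_iff_forall_notMem.1 IH _ ⟨hx1, y, hy, rfl⟩
      · -- S^[k] y ∈ marker L, y ∈ U \ mbad (marker L): y ∈ S.symm^[k] '' marker L
        refine hy.2 (Set.mem_union_right _ ?_)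
        refine Set.mem_biUnion hmem (Set.mem_union_right _ ?_)
        exact ⟨(⇑S)^[k] y, hx1, hsy⟩
      · -- x ∈ U \ mbad, x = S^[k] y with y ∈ marker L
        refine hx1.2 (Set.mem_union_right _ ?_)
        exact Set.mem_biUnion hmem (Set.mem_union_left _ ⟨y, hy, rfl⟩)
      · exact Set.eq_empty_iff_forall_notMem.1 (h U (List.mem_cons_self) k hk1 hkN)
          _ ⟨hx1.1, y, hy.1, rfl⟩

lemma marker_cover (L : List (Set Z)) :
    ∀ U ∈ L, U ⊆ mbadSet S N (marker S N L) := by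
  induction L with
  | nil => simp
  | cons U L ih =>
      intro V hV z hz
      have hsub : marker S N L ⊆ marker S N (U :: L) := Set.subset_union_left
      rcases List.mem_cons.1 hV with rfl | hV
      · by_cases hb : z ∈ mbadSet S N (marker S N L)
        · exact mbadSet_mono S N hsub hb
        · exact subset_mbadSet S N _ (Set.mem_union_right _ ⟨hz, hb⟩)
      · exact mbadSet_mono S N hsub (ih V hV hz)

end

/-- Marker property: for an aperiodic zero-dimensional system `(Z,S)` and `N ≥ 1`
there is a clopen `B ⊆ Z` with `B ∩ S^k B = ∅` for `1 ≤ k ≤ N` and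
`Z = ⋃_{k=1}^{2N+1} S^k B`. (Zero-dimensionality of the compact metric space `Z`
is expressed as total disconnectedness.) -/
theorem stmt2 {Z : Type*} [MetricSpace Z] [CompactSpace Z] [TotallyDisconnectedSpace Z]
    (S : Z ≃ₜ Z) (hap : ∀ (z : Z) (n : ℕ), 0 < n → (⇑S)^[n] z ≠ z)
    (N : ℕ) (hN : 0 < N) :
    ∃ B : Set Z, IsClopen B ∧
      (∀ k : ℕ, 1 ≤ k → k ≤ N → B ∩ (⇑S)^[k] '' B = ∅) ∧
      (⋃ k ∈ Finset.Icc 1 (2 * N + 1), (⇑S)^[k] '' B) = Set.univ := by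
  -- Step 1: for each point, a clopen neighborhood disjoint from its first N iterates
  have step1 : ∀ z : Z, ∃ V : Set Z, IsClopen V ∧ z ∈ V ∧
      ∀ k, 1 ≤ k → k ≤ N → V ∩ (⇑S)^[k] '' V = ∅ := by
    intro z
    have hW : ∀ k : ℕ, ∃ W : Set Z, IsOpen W ∧ z ∈ W ∧
        (1 ≤ k → k ≤ N → W ∩ (⇑S)^[k] '' W = ∅) := by
      intro k
      by_cases hk : 1 ≤ k
      · have hne : (⇑S)^[k] z ≠ z := hap z k hk
        obtain ⟨U1, U2, hU1, hU2, hzU2, hzU1, hdisj⟩ := t2_separation hne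
        refine ⟨U2 ∩ (⇑S)^[k] ⁻¹' U1, hU2.inter (hU1.preimage
          (S.continuous.iterate k)), ⟨hzU1, hzU2⟩, fun _ _ => ?_⟩
        rw [Set.eq_empty_iff_forall_notMem]
        rintro x ⟨⟨hx1, _⟩, y, ⟨_, hy2⟩, rfl⟩
        exact Set.disjoint_left.1 hdisj hy2 hx1
      · exact ⟨Set.univ, isOpen_univ, trivial, fun h1 _ => absurd h1 hk⟩
    choose W hWopen hWz hWdisj using hW
    have hWallopen : IsOpen (⋂ k ∈ Finset.Icc 1 N, W k) :=
      isOpen_biInter_finset fun k _ => hWopen k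
    have hzWall : z ∈ ⋂ k ∈ Finset.Icc 1 N, W k :=
      Set.mem_biInter fun k _ => hWz k
    obtain ⟨V, hVclopen, hzV, hVsub⟩ := compact_exists_isClopen_in_isOpen hWallopen hzWall
    refine ⟨V, hVclopen, hzV, fun k hk1 hkN => ?_⟩
    have hVW : V ⊆ W k := fun x hx =>
      Set.mem_iInter₂.1 (hVsub hx) k (Finset.mem_Icc.2 ⟨hk1, hkN⟩)
    rw [Set.eq_empty_iff_forall_notMem]
    rintro x ⟨hx, y, hy, rfl⟩
    exact Set.eq_empty_iff_forall_notMem.1 (hWdisj k hk1 hkN) _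
      ⟨hVW hx, y, hVW hy, rfl⟩
  choose V hVclopen hVmem hVdisj using step1
  -- Step 2: finite subcover
  obtain ⟨t, ht⟩ := isCompact_univ.elim_finite_subcover V
    (fun z => (hVclopen z).2) (fun x _ => Set.mem_iUnion.2 ⟨x, hVmem x⟩)
  set L : List (Set Z) := t.toList.map V with hL
  set B : Set Z := marker S N L with hB
  have hLclopen : ∀ U ∈ L, IsClopen U := by
    intro U hU
    obtain ⟨z, _, rfl⟩ := List.mem_map.1 hU
    exact hVclopen z
  have hLdisj : ∀ U ∈ L, ∀ k, 1 ≤ k → k ≤ N → U ∩ (⇑S)^[k] '' U = ∅ := by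
    intro U hU
    obtain ⟨z, _, rfl⟩ := List.mem_map.1 hU
    exact hVdisj z
  have hBclopen : IsClopen B := marker_isClopen S N L hLclopen
  have hBdisj := marker_disj S N L hLdisj
  refine ⟨B, hBclopen, hBdisj, ?_⟩
  -- Step 3: covering
  have hcov : ∀ x : Z, x ∈ mbadSet S N B := by
    intro x
    obtain ⟨z, hz, hx⟩ := Set.mem_iUnion₂.1 (ht (Set.mem_univ x))
    exact marker_cover S N L (V z) (List.mem_map.2 ⟨z, Finset.mem_toList.2 hz, rfl⟩) hx
  rw [Set.eq_univ_iff_forall]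
  intro x
  have hw := hcov ((⇑S.symm)^[N + 1] x)
  have hxw : (⇑S)^[N + 1] ((⇑S.symm)^[N + 1] x) = x :=
    (Function.RightInverse.iterate S.apply_symm_apply (N + 1)) x
  have memIcc : ∀ k, 1 ≤ k → k ≤ 2 * N + 1 → ∀ b ∈ B, (⇑S)^[k] b = x →
      x ∈ ⋃ k ∈ Finset.Icc 1 (2 * N + 1), (⇑S)^[k] '' B := by
    intro k h1 h2 b hb hbx
    exact Set.mem_biUnion (Finset.mem_Icc.2 ⟨h1, h2⟩) ⟨b, hb, hbx⟩
  rcases hw with hw | hw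
  · -- w ∈ B, x = S^[N+1] w
    exact memIcc (N + 1) (by omega) (by omega) _ hw hxw
  · obtain ⟨k, hk, hw⟩ := Set.mem_iUnion₂.1 hw
    rw [Finset.mem_Icc] at hk
    rcases hw with ⟨b, hb, hbw⟩ | ⟨b, hb, hbw⟩
    · -- w = S^[k] b, x = S^[N+1+k] b
      refine memIcc (N + 1 + k) (by omega) (by omega) b hb ?_
      rw [Function.iterate_add_apply, hbw, hxw]
    · -- w = S.symm^[k] b, x = S^[N+1-k] b
      refine memIcc (N + 1 - k) (by omega) (by omega) b hb ?_
      have hbw' : (⇑S)^[k] ((⇑S.symm)^[k] b) = b :=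
        (Function.RightInverse.iterate S.apply_symm_apply k) b
      have harith : N + 1 - k + k = N + 1 := by omega
      calc (⇑S)^[N + 1 - k] b
          = (⇑S)^[N + 1 - k] ((⇑S)^[k] ((⇑S.symm)^[k] b)) := by rw [hbw']
        _ = (⇑S)^[N + 1 - k + k] ((⇑S.symm)^[k] b) :=
            (Function.iterate_add_apply _ _ _ _).symm
        _ = (⇑S)^[N + 1] ((⇑S.symm)^[N + 1] x) := by rw [harith, hbw]
        _ = x := hxw
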